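/- Let T > 0 and c ∈ ℝ. Let v : [0,T] → ℂ and g : [0,T] → ℂ be continuous, let θ : [0,T] → ℂ be twice continuously differentiable with θ'(T) = 0, and define w(t) = ∫_0^t e^{−ic(t−s)} v(s) ds. If θ satisfies the Volterra equation of the second kind θ'(t) + ∫_t^T e^{−ic(s−t)} ( θ(s) − i c θ'(s) ) ds = g(t) for all t ∈ [0,T], then ∫_0^T ( θ(t) w(t) + θ'(t) w'(t) ) dt = ∫_0^T g(s) v(s) ds. -/

import Mathlib

open Set Complex MeasureTheory

private lemma ftc_right_icc {a b : ℝ} {f : ℝ → ℂ} (hf : ContinuousOn f (Icc a b))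
    {t : ℝ} (ht : t ∈ Icc a b) :
    HasDerivWithinAt (fun u => ∫ x in a..u, f x) (f t) (Icc a b) t := by
  haveI : Fact (t ∈ Icc a b) := ⟨ht⟩
  exact intervalIntegral.integral_hasDerivWithinAt_right
    ((hf.mono (Icc_subset_Icc le_rfl ht.2)).intervalIntegrable_of_Icc ht.1)
    (AEStronglyMeasurable.stronglyMeasurableAtFilter_of_mem
      (hf.aestronglyMeasurable measurableSet_Icc) self_mem_nhdsWithin)
    (hf t ht)

private lemma ftc_left_icc {a b : ℝ} {f : ℝ → ℂ} (hf : ContinuousOn f (Icc a b))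
    {t : ℝ} (ht : t ∈ Icc a b) :
    HasDerivWithinAt (fun u => ∫ x in u..b, f x) (-(f t)) (Icc a b) t := by
  haveI : Fact (t ∈ Icc a b) := ⟨ht⟩
  exact intervalIntegral.integral_hasDerivWithinAt_left
    ((hf.mono (Icc_subset_Icc ht.1 le_rfl)).intervalIntegrable_of_Icc ht.2)
    (AEStronglyMeasurable.stronglyMeasurableAtFilter_of_mem
      (hf.aestronglyMeasurable measurableSet_Icc) self_mem_nhdsWithin)
    (hf t ht)

private lemma exp_lin_deriv (k : ℂ) (t : ℝ) :
    HasDerivAt (fun x : ℝ => Complex.exp (k * (x : ℂ))) (k * Complex.exp (k * (t : ℂ))) t := by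
  have h1 : HasDerivAt (fun x : ℝ => k * (x : ℂ)) k t := by
    simpa using (Complex.ofRealCLM.hasDerivAt (x := t)).const_mul k
  simpa [mul_comm] using h1.cexp

/-- The key averaging identity: if `θ` is twice continuously differentiable on `[0,T]`
with `θ'(T) = 0` and satisfies the Volterra equation of the second kind
`θ'(t) + ∫_t^T e^{-ic(s-t)} (θ(s) - i c θ'(s)) ds = g(t)`, and
`w(t) = ∫_0^t e^{-ic(t-s)} v(s) ds`, then
`∫_0^T (θ w + θ' w') dt = ∫_0^T g(s) v(s) ds`. -/
theorem averaging_reduces_to_data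
    (T : ℝ) (hT : 0 < T) (c : ℝ) (v g θ θ' θ'' w w' : ℝ → ℂ)
    (hv : ContinuousOn v (Icc 0 T))
    (hg : ContinuousOn g (Icc 0 T))
    (hθ : ∀ t ∈ Icc (0 : ℝ) T, HasDerivWithinAt θ (θ' t) (Icc 0 T) t)
    (hθ' : ∀ t ∈ Icc (0 : ℝ) T, HasDerivWithinAt θ' (θ'' t) (Icc 0 T) t)
    (hθ'' : ContinuousOn θ'' (Icc 0 T))
    (hθT : θ' T = 0)
    (hw : ∀ t, w t = ∫ s in (0 : ℝ)..t,
      Complex.exp (-(Complex.I * (c : ℂ) * ((t : ℂ) - (s : ℂ)))) * v s)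
    (hw' : ∀ t ∈ Icc (0 : ℝ) T, HasDerivWithinAt w (w' t) (Icc 0 T) t)
    (hvolt : ∀ t ∈ Icc (0 : ℝ) T,
      θ' t + ∫ s in t..T,
        Complex.exp (-(Complex.I * (c : ℂ) * ((s : ℂ) - (t : ℂ)))) *
          (θ s - Complex.I * (c : ℂ) * θ' s) = g t) :
    (∫ t in (0 : ℝ)..T, (θ t * w t + θ' t * w' t))
      = ∫ s in (0 : ℝ)..T, g s * v s := by
  have hcI : Continuous fun x : ℝ => Complex.exp (Complex.I * (c : ℂ) * (x : ℂ)) := by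
    fun_prop
  have hcI' : Continuous fun x : ℝ => Complex.exp (-(Complex.I * (c : ℂ) * (x : ℂ))) := by
    fun_prop
  have hexpcancel : ∀ t : ℝ, Complex.exp (-(Complex.I * (c : ℂ) * (t : ℂ))) *
      Complex.exp (Complex.I * (c : ℂ) * (t : ℂ)) = 1 := by
    intro t
    rw [← Complex.exp_add, neg_add_cancel, Complex.exp_zero]
  -- continuity of the basic functions
  have hθc : ContinuousOn θ (Icc 0 T) := fun t ht => (hθ t ht).continuousWithinAt
  have hθ'c : ContinuousOn θ' (Icc 0 T) := fun t ht => (hθ' t ht).continuousWithinAt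
  have hwc : ContinuousOn w (Icc 0 T) := fun t ht => (hw' t ht).continuousWithinAt
  -- Step A : w t = exp(-ict) * F t  with F t = ∫_0^t exp(ics) v s ds
  set F : ℝ → ℂ := fun t => ∫ s in (0:ℝ)..t, Complex.exp (Complex.I * (c : ℂ) * (s : ℂ)) * v s
    with hF
  have hwEq : ∀ t, w t = Complex.exp (-(Complex.I * (c : ℂ) * (t : ℂ))) * F t := by
    intro t
    rw [hw t, hF]
    rw [← intervalIntegral.integral_const_mul]
    apply intervalIntegral.integral_congr
    intro s _
    show Complex.exp (-(Complex.I * (c : ℂ) * ((t : ℂ) - (s : ℂ)))) * v s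
      = Complex.exp (-(Complex.I * (c : ℂ) * (t : ℂ))) *
        (Complex.exp (Complex.I * (c : ℂ) * (s : ℂ)) * v s)
    rw [← mul_assoc, ← Complex.exp_add]
    congr 2
    ring
  have hwderiv : ∀ t ∈ Icc (0 : ℝ) T,
      HasDerivWithinAt w (v t - Complex.I * (c : ℂ) * w t) (Icc 0 T) t := by
    intro t ht
    have hFd : HasDerivWithinAt F (Complex.exp (Complex.I * (c : ℂ) * (t : ℂ)) * v t)
        (Icc 0 T) t := ftc_right_icc (by exact (hcI.continuousOn).mul hv) ht
    have hEd : HasDerivWithinAt (fun x : ℝ => Complex.exp (-(Complex.I * (c : ℂ) * (x : ℂ))))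
        (-(Complex.I * (c : ℂ)) * Complex.exp (-(Complex.I * (c : ℂ) * (t : ℂ)))) (Icc 0 T) t := by
      have := (exp_lin_deriv (-(Complex.I * (c : ℂ))) t).hasDerivWithinAt (s := Icc 0 T)
      simpa [neg_mul] using this
    have h2 := hEd.mul hFd
    rw [show w = fun u : ℝ => Complex.exp (-(Complex.I * (c : ℂ) * (u : ℂ))) * F u from
      funext hwEq]
    refine h2.congr_deriv (Eq.symm ?_)
    try simp only
    linear_combination (-(v t)) * hexpcancel t
  have hDU : UniqueDiffOn ℝ (Icc (0:ℝ) T) := uniqueDiffOn_Icc hT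
  have hw'Eq : ∀ t ∈ Icc (0 : ℝ) T, w' t = v t - Complex.I * (c : ℂ) * w t := by
    intro t ht
    rw [← (hw' t ht).derivWithin (hDU t ht), (hwderiv t ht).derivWithin (hDU t ht)]
  have hw'c : ContinuousOn w' (Icc 0 T) := by
    apply ContinuousOn.congr (f := fun t => v t - Complex.I * (c : ℂ) * w t)
    · exact hv.sub (continuousOn_const.mul hwc)
    · exact hw'Eq
  -- Step B : Φ
  set q : ℝ → ℂ := fun s => Complex.exp (-(Complex.I * (c : ℂ) * (s : ℂ))) *
      (θ s - Complex.I * (c : ℂ) * θ' s) with hq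
  have hqc : ContinuousOn q (Icc 0 T) :=
    (hcI'.continuousOn).mul (hθc.sub (continuousOn_const.mul hθ'c))
  set Φ : ℝ → ℂ := fun t => Complex.exp (Complex.I * (c : ℂ) * (t : ℂ)) *
      ∫ s in t..T, q s with hΦ
  have hΦEq : ∀ t, Φ t = ∫ s in t..T,
      Complex.exp (-(Complex.I * (c : ℂ) * ((s : ℂ) - (t : ℂ)))) *
        (θ s - Complex.I * (c : ℂ) * θ' s) := by
    intro t
    rw [hΦ]
    simp only
    rw [← intervalIntegral.integral_const_mul]
    apply intervalIntegral.integral_congr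
    intro s _
    show Complex.exp (Complex.I * (c : ℂ) * (t : ℂ)) * q s
      = Complex.exp (-(Complex.I * (c : ℂ) * ((s : ℂ) - (t : ℂ)))) *
        (θ s - Complex.I * (c : ℂ) * θ' s)
    rw [hq]
    rw [← mul_assoc, ← Complex.exp_add]
    congr 2
    ring
  have hgEq : ∀ t ∈ Icc (0:ℝ) T, g t = θ' t + Φ t := by
    intro t ht
    rw [hΦEq t, ← hvolt t ht]
  have hΦderiv : ∀ t ∈ Icc (0 : ℝ) T,
      HasDerivWithinAt Φ (Complex.I * (c : ℂ) * Φ t - (θ t - Complex.I * (c : ℂ) * θ' t))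
        (Icc 0 T) t := by
    intro t ht
    have hGd : HasDerivWithinAt (fun u => ∫ s in u..T, q s) (-(q t)) (Icc 0 T) t :=
      ftc_left_icc hqc ht
    have hEd : HasDerivWithinAt (fun x : ℝ => Complex.exp (Complex.I * (c : ℂ) * (x : ℂ)))
        ((Complex.I * (c : ℂ)) * Complex.exp (Complex.I * (c : ℂ) * (t : ℂ))) (Icc 0 T) t :=
      (exp_lin_deriv (Complex.I * (c : ℂ)) t).hasDerivWithinAt
    have h2 := hEd.mul hGd
    rw [hΦ]
    refine h2.congr_deriv (Eq.symm ?_)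
    simp only [hq]
    linear_combination (θ t - Complex.I * (c : ℂ) * θ' t) * hexpcancel t
  have hΦc : ContinuousOn Φ (Icc 0 T) := fun t ht => (hΦderiv t ht).continuousWithinAt
  -- Step C : derivative of Φ * w
  have hPderiv : ∀ t ∈ Icc (0 : ℝ) T,
      HasDerivWithinAt (fun u => Φ u * w u)
        (g t * v t - (θ t * w t + θ' t * w' t)) (Icc 0 T) t := by
    intro t ht
    have h2 := (hΦderiv t ht).mul (hw' t ht)
    refine h2.congr_deriv (Eq.symm ?_)
    rw [hgEq t ht, hw'Eq t ht]
    ring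
  -- Step D : integrate
  have hintcont : ContinuousOn (fun t => g t * v t - (θ t * w t + θ' t * w' t)) (Icc 0 T) :=
    (hg.mul hv).sub ((hθc.mul hwc).add (hθ'c.mul hw'c))
  have hFTC : (∫ t in (0:ℝ)..T, (g t * v t - (θ t * w t + θ' t * w' t)))
      = Φ T * w T - Φ 0 * w 0 := by
    apply intervalIntegral.integral_eq_sub_of_hasDeriv_right_of_le hT.le
    · exact hΦc.mul hwc
    · intro x hx
      exact ((hPderiv x (Ioo_subset_Icc_self hx)).hasDerivAt
        (Icc_mem_nhds hx.1 hx.2)).hasDerivWithinAt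
    · exact hintcont.intervalIntegrable_of_Icc hT.le
  have hΦT : Φ T = 0 := by rw [hΦ]; simp
  have hw0 : w 0 = 0 := by rw [hw]; simp
  have hsplit : (∫ t in (0:ℝ)..T, (g t * v t - (θ t * w t + θ' t * w' t)))
      = (∫ s in (0:ℝ)..T, g s * v s) - ∫ t in (0:ℝ)..T, (θ t * w t + θ' t * w' t) := by
    apply intervalIntegral.integral_sub
    · exact ((hg.mul hv)).intervalIntegrable_of_Icc hT.le
    · exact ((hθc.mul hwc).add (hθ'c.mul hw'c)).intervalIntegrable_of_Icc hT.le
  rw [hFTC, hΦT, hw0] at hsplit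
  simp only [zero_mul, mul_zero, sub_zero] at hsplit
  exact (sub_eq_zero.mp hsplit.symm).symm
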